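/- arXiv:1012.3563 — 3 statements merged into one kernel-verified Lean document; each statement's English description precedes it below -/
import Mathlib

section
/- Let p ∈ S_d be a homogeneous polynomial of degree d in x_0,…,x_n over ℂ, and let r ≥ 1. Suppose there exists a homogeneous ideal J ⊆ S such that h_{S/J}(e) ≤ r for every e ≥ 0 and α ⌟ p = 0 for every α ∈ J ∩ S_d. Then cr_i(p) ≤ r for every i with 0 ≤ i ≤ d. (This is the affine-cone form of the inclusion of the r-th cactus variety of the d-th Veronese embedding of ℙ^n in the locus where the i-th catalecticant matrix has rank at most r.) -/
open MvPolynomial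

noncomputable section

/-- The polynomial ring `S = ℂ[x_0, …, x_n]`. -/
abbrev PolyS (n : ℕ) : Type := MvPolynomial (Fin (n+1)) ℂ

/-- The iterated partial-derivative operator `∂^m` associated to an exponent vector `m`. -/
def monDeriv {n : ℕ} (m : Fin (n+1) →₀ ℕ) : Module.End ℂ (PolyS n) :=
  ((List.finRange (n+1)).map fun i =>
    (((pderiv i).toLinearMap : Module.End ℂ (PolyS n)) ^ (m i))).prod

/-- The contraction `α ⌟ p`: apply to `p` the constant-coefficient differential operator
`α(∂/∂x_0, …, ∂/∂x_n)`. -/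
def contract {n : ℕ} (α p : PolyS n) : PolyS n :=
  α.support.sum fun m => α.coeff m • monDeriv m p

/-- `Ω_p^e = { α ⌟ p : α ∈ S_e }`. -/
def Omega {n : ℕ} (p : PolyS n) (e : ℕ) : Set (PolyS n) :=
  {q | ∃ α ∈ homogeneousSubmodule (Fin (n+1)) ℂ e, q = contract α p}

/-- The `e`-th catalecticant rank `cr_e(p) = dim_ℂ Ω_p^e`. -/
def cr {n : ℕ} (e : ℕ) (p : PolyS n) : ℕ :=
  Module.finrank ℂ (Submodule.span ℂ (Omega p e))

/-- A homogeneous ideal of `S`. -/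
def IsHomogIdeal {n : ℕ} (J : Ideal (PolyS n)) : Prop :=
  ∀ p ∈ J, ∀ e : ℕ, homogeneousComponent e p ∈ J

/-- The graded piece `J ∩ S_e`, as a `ℂ`-subspace of `S`. -/
def gradedPiece {n : ℕ} (J : Ideal (PolyS n)) (e : ℕ) : Submodule ℂ (PolyS n) :=
  (Submodule.restrictScalars ℂ J) ⊓ homogeneousSubmodule (Fin (n+1)) ℂ e

/-- The Hilbert function `h_{S/J}(e) = dim_ℂ S_e − dim_ℂ (J ∩ S_e)`. -/
def hilb {n : ℕ} (J : Ideal (PolyS n)) (e : ℕ) : ℕ :=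
  Module.finrank ℂ (homogeneousSubmodule (Fin (n+1)) ℂ e) -
    Module.finrank ℂ (gradedPiece J e)

/-- The irrelevant maximal ideal `𝔪 = (x_0, …, x_n)`. -/
def irrel (n : ℕ) : Ideal (PolyS n) := Ideal.span (Set.range X)

/-- `J` is saturated: `J = { f : 𝔪^N · f ⊆ J for some N }`. -/
def IsSaturatedIdeal {n : ℕ} (J : Ideal (PolyS n)) : Prop :=
  ∀ f : PolyS n, f ∈ J ↔ ∃ N : ℕ, ∀ g ∈ (irrel n) ^ N, g * f ∈ J

/-- Polynomial functions on a `ℂ`-vector space: the subalgebra of functions generated by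
the linear functionals. -/
def polyFuns (V : Type*) [AddCommGroup V] [Module ℂ V] : Subalgebra ℂ (V → ℂ) :=
  Algebra.adjoin ℂ (Set.range fun f : V →ₗ[ℂ] ℂ => (f : V → ℂ))

/-- The Zariski closure of a set `A` in a `ℂ`-vector space: the common zero locus of all
polynomial functions vanishing identically on `A`. -/
def zClosure {V : Type*} [AddCommGroup V] [Module ℂ V] (A : Set V) : Set V :=
  {p | ∀ F ∈ polyFuns V, (∀ a ∈ A, F a = 0) → F p = 0}

/-- The set `{ ℓ_1^d + ⋯ + ℓ_r^d : ℓ_j ∈ S_1 }` inside `S_d`. -/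
def secantSet (n r d : ℕ) : Set (homogeneousSubmodule (Fin (n+1)) ℂ d) :=
  {q | ∃ ℓ : Fin r → PolyS n, (∀ j, ℓ j ∈ homogeneousSubmodule (Fin (n+1)) ℂ 1) ∧
        (q : PolyS n) = ∑ j, (ℓ j) ^ d}

/-- The ideal generated by all homogeneous elements of `Ann(p)` of degree at most `r`. -/
def lowAnnIdeal {n : ℕ} (p : PolyS n) (r : ℕ) : Ideal (PolyS n) :=
  Ideal.span {α | contract α p = 0 ∧ ∃ e ≤ r, α ∈ homogeneousSubmodule (Fin (n+1)) ℂ e}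


lemma pderivPow_monomial {n : ℕ} (i : Fin (n+1)) (a : ℕ) (s : Fin (n+1) →₀ ℕ) (c : ℂ) :
    (((pderiv i).toLinearMap : Module.End ℂ (PolyS n)) ^ a) (monomial s c)
      = monomial (s - Finsupp.single i a) (c * ((s i).descFactorial a : ℂ)) := by
  induction a generalizing s c with
  | zero => simp
  | succ a ih =>
    rw [pow_succ, Module.End.mul_apply]
    rw [show ((pderiv i).toLinearMap : Module.End ℂ (PolyS n)) ((monomial s) c)
        = pderiv i (monomial s c) from rfl, pderiv_monomial, ih]
    have he : (s - Finsupp.single i 1) - Finsupp.single i a = s - Finsupp.single i (a+1) := by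
      rw [tsub_tsub, ← Finsupp.single_add, Nat.one_add]
    rw [he]
    congr 1
    rw [Finsupp.tsub_apply, Finsupp.single_eq_same]
    rcases Nat.eq_zero_or_eq_succ_pred (s i) with h | h
    · rw [h]; simp [Nat.descFactorial_eq_zero_iff_lt.mpr (Nat.succ_pos a)]
    · rw [h, Nat.succ_sub_one, Nat.succ_descFactorial_succ]
      push_cast; ring

lemma listSum_single_apply {n : ℕ} (m : Fin (n+1) →₀ ℕ) (l : List (Fin (n+1))) (j : Fin (n+1))
    (hl : l.Nodup) :
    ((l.map fun i => Finsupp.single i (m i)).sum) j = if j ∈ l then m j else 0 := by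
  induction l with
  | nil => simp
  | cons i t ih =>
    rw [List.nodup_cons] at hl
    rw [List.map_cons, List.sum_cons, Finsupp.add_apply, ih hl.2, Finsupp.single_apply]
    by_cases h : j = i
    · subst h; simp [hl.1]
    · simp [h, Ne.symm h, List.mem_cons]

lemma listDeriv_monomial {n : ℕ} (l : List (Fin (n+1))) (hl : l.Nodup)
    (m m' : Fin (n+1) →₀ ℕ) (c : ℂ) :
    ((l.map fun i => ((pderiv i).toLinearMap : Module.End ℂ (PolyS n)) ^ (m i)).prod)
        (monomial m' c)
      = monomial (m' - (l.map fun i => Finsupp.single i (m i)).sum)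
          (c * (l.map fun i => ((m' i).descFactorial (m i) : ℂ)).prod) := by
  induction l with
  | nil => simp
  | cons i t ih =>
    rw [List.nodup_cons] at hl
    rw [List.map_cons, List.prod_cons, Module.End.mul_apply, ih hl.2, pderivPow_monomial]
    have hti : ((t.map fun j => Finsupp.single j (m j)).sum) i = 0 := by
      rw [listSum_single_apply m t i hl.2, if_neg hl.1]
    rw [List.map_cons, List.sum_cons, List.map_cons, List.prod_cons]
    have he : (m' - (t.map fun j => Finsupp.single j (m j)).sum) - Finsupp.single i (m i)
        = m' - (Finsupp.single i (m i) + (t.map fun j => Finsupp.single j (m j)).sum) := by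
      rw [tsub_tsub, add_comm ((t.map fun j => Finsupp.single j (m j)).sum) (Finsupp.single i (m i))]
    rw [he]
    congr 1
    rw [Finsupp.tsub_apply, hti, Nat.sub_zero]
    ring

lemma contract_eq {n : ℕ} (α p : PolyS n) :
    contract α p = Finsupp.sum (AddMonoidAlgebra.coeff α) fun m c => c • monDeriv m p := rfl

lemma monDeriv_monomial {n : ℕ} (m m' : Fin (n+1) →₀ ℕ) (c : ℂ) :
    monDeriv m (monomial m' c)
      = monomial (m' - m) (c * ∏ i, ((m' i).descFactorial (m i) : ℂ)) := by
  rw [monDeriv, listDeriv_monomial _ (List.nodup_finRange _)]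
  have h1 : ((List.finRange (n+1)).map fun i => Finsupp.single i (m i)).sum = m := by
    ext j
    rw [listSum_single_apply m _ j (List.nodup_finRange _), if_pos (List.mem_finRange j)]
  have h2 : ((List.finRange (n+1)).map fun i => ((m' i).descFactorial (m i) : ℂ)).prod
      = ∏ i, ((m' i).descFactorial (m i) : ℂ) := by
    rw [← List.ofFn_eq_map, List.prod_ofFn]
  rw [h1, h2]

lemma contract_monomial {n : ℕ} (m : Fin (n+1) →₀ ℕ) (c : ℂ) (q : PolyS n) :
    contract (monomial m c) q = c • monDeriv m q := by
  rw [contract_eq, ← single_eq_monomial, AddMonoidAlgebra.coeff_single, Finsupp.sum_single_index]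
  rw [zero_smul]

def contractMap {n : ℕ} (p : PolyS n) : PolyS n →ₗ[ℂ] PolyS n where
  toFun α := contract α p
  map_add' a b := by
    show contract (a + b) p = contract a p + contract b p
    rw [contract_eq, contract_eq, contract_eq]
    exact Finsupp.sum_add_index' (fun m => zero_smul ℂ _) (fun m c c' => add_smul c c' _)
  map_smul' c a := by
    show contract (c • a) p = c • contract a p
    rw [contract_eq, contract_eq, AddMonoidAlgebra.coeff_smul]
    rw [Finsupp.sum_smul_index fun m => zero_smul ℂ (monDeriv m p)]
    rw [Finsupp.smul_sum]
    simp only [smul_smul]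

lemma descFactorial_add' (N a b : ℕ) :
    N.descFactorial (a + b) = N.descFactorial b * (N - b).descFactorial a := by
  induction a with
  | zero => simp
  | succ a ih =>
    have : a + 1 + b = (a + b) + 1 := by omega
    rw [this, Nat.descFactorial_succ, ih, Nat.descFactorial_succ]
    have : N - (a + b) = N - b - a := by omega
    rw [this]; ring

lemma monDeriv_add_apply {n : ℕ} (m m' : Fin (n+1) →₀ ℕ) (q : PolyS n) :
    monDeriv (m + m') q = monDeriv m (monDeriv m' q) := by
  induction q using MvPolynomial.induction_on' with
  | monomial m'' c =>
    rw [monDeriv_monomial, monDeriv_monomial, monDeriv_monomial]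
    have he : m'' - m' - m = m'' - (m + m') := by
      rw [tsub_tsub, add_comm m' m]
    rw [he]
    congr 1
    rw [mul_assoc, ← Finset.prod_mul_distrib]
    refine congrArg _ (Finset.prod_congr rfl fun i _ => ?_)
    rw [Finsupp.add_apply, Finsupp.tsub_apply, descFactorial_add']
    push_cast
    ring
  | add p q hp hq => rw [map_add, map_add, map_add, hp, hq]

lemma contractMap_apply {n : ℕ} (p α : PolyS n) : contractMap p α = contract α p := rfl

lemma contract_add_left {n : ℕ} (a b p : PolyS n) :
    contract (a + b) p = contract a p + contract b p :=
  map_add (contractMap p) a b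

lemma contract_mul {n : ℕ} (α β p : PolyS n) :
    contract (α * β) p = contract α (contract β p) := by
  induction α using MvPolynomial.induction_on' with
  | add a b ha hb =>
    rw [add_mul, contract_add_left, ha, hb, contract_add_left]
  | monomial m c =>
    induction β using MvPolynomial.induction_on' with
    | add a b ha hb =>
      rw [mul_add, contract_add_left, ha, hb, contract_add_left,
        contract_monomial, contract_monomial, contract_monomial, map_add, smul_add]
    | monomial m' c' =>
      rw [monomial_mul, contract_monomial, contract_monomial, contract_monomial,
        monDeriv_add_apply, map_smul, smul_smul]

lemma myDegree_add {n : ℕ} (f g : Fin (n+1) →₀ ℕ) :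
    (f + g).degree = f.degree + g.degree := by
  simp only [Finsupp.degree_eq_weight_one]
  exact map_add _ f g

lemma eq_of_le_of_degree_eq {n : ℕ} {f g : Fin (n+1) →₀ ℕ} (h : f ≤ g)
    (hd : f.degree = g.degree) : f = g := by
  have h1 : f + (g - f) = g := add_tsub_cancel_of_le h
  have h2 : (g - f).degree = 0 := by
    have := myDegree_add f (g - f)
    rw [h1, ← hd] at this
    omega
  rw [Finsupp.degree_eq_zero_iff] at h2
  rw [← h1, h2, add_zero]

lemma prod_desc_eq_zero {n : ℕ} {m m' : Fin (n+1) →₀ ℕ} (h : ¬ m ≤ m') :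
    (∏ i, ((m' i).descFactorial (m i) : ℂ)) = 0 := by
  rw [Finsupp.le_def] at h
  push_neg at h
  obtain ⟨j, hj⟩ := h
  exact Finset.prod_eq_zero (Finset.mem_univ j)
    (by rw [Nat.descFactorial_eq_zero_iff_lt.mpr hj, Nat.cast_zero])

lemma monDeriv_monomial_mem {n : ℕ} {m m' : Fin (n+1) →₀ ℕ} (c : ℂ) {i d : ℕ}
    (hm : m.degree = i) (hm' : m'.degree = d) :
    monDeriv m (monomial m' c) ∈ homogeneousSubmodule (Fin (n+1)) ℂ (d - i) := by
  rw [monDeriv_monomial]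
  by_cases h : m ≤ m'
  · rw [mem_homogeneousSubmodule]
    apply isHomogeneous_monomial
    have h1 : (m' - m) + m = m' := tsub_add_cancel_of_le h
    have h2 := myDegree_add (m' - m) m
    rw [h1, hm, hm'] at h2
    have : i ≤ d := by rw [← hm, ← hm']; omega
    omega
  · rw [prod_desc_eq_zero h, mul_zero, map_zero]
    exact Submodule.zero_mem _

lemma contract_mem_homog {n : ℕ} {α p : PolyS n} {i d : ℕ}
    (hα : α ∈ homogeneousSubmodule (Fin (n+1)) ℂ i)
    (hp : p ∈ homogeneousSubmodule (Fin (n+1)) ℂ d) :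
    contract α p ∈ homogeneousSubmodule (Fin (n+1)) ℂ (d - i) := by
  rw [contract]
  apply Submodule.sum_mem
  intro m hm
  apply Submodule.smul_mem
  have hmd : m.degree = i := by
    by_contra hne
    exact (mem_support_iff.mp hm) (((mem_homogeneousSubmodule _ _).mp hα).coeff_eq_zero hne)
  have hps : monDeriv m p = ∑ m' ∈ p.support, monDeriv m (monomial m' (coeff m' p)) := by
    conv_lhs => rw [p.as_sum]
    rw [map_sum]
  rw [hps]
  apply Submodule.sum_mem
  intro m' hm'
  have hmd' : m'.degree = d := by
    by_contra hne
    exact (mem_support_iff.mp hm') (((mem_homogeneousSubmodule _ _).mp hp).coeff_eq_zero hne)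
  exact monDeriv_monomial_mem _ hmd hmd'

lemma eq_zero_of_contract_eq_zero {n : ℕ} {q : PolyS n} {k : ℕ}
    (hq : q ∈ homogeneousSubmodule (Fin (n+1)) ℂ k)
    (h : ∀ β ∈ homogeneousSubmodule (Fin (n+1)) ℂ k, contract β q = 0) : q = 0 := by
  by_contra hq0
  obtain ⟨m, hm⟩ := (support_nonempty.mpr hq0)
  have hmd : m.degree = k := by
    by_contra hne
    exact (mem_support_iff.mp hm) (((mem_homogeneousSubmodule _ _).mp hq).coeff_eq_zero hne)
  have hβ : (monomial m 1 : PolyS n) ∈ homogeneousSubmodule (Fin (n+1)) ℂ k :=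
    (mem_homogeneousSubmodule _ _).mpr (isHomogeneous_monomial _ hmd)
  have h0 := h _ hβ
  rw [contract_monomial, one_smul] at h0
  have hval : monDeriv m q = monomial 0 (coeff m q * ∏ i, ((m i).factorial : ℂ)) := by
    have hps : monDeriv m q = ∑ m' ∈ q.support, monDeriv m (monomial m' (coeff m' q)) := by
      conv_lhs => rw [q.as_sum]
      rw [map_sum]
    rw [hps, Finset.sum_eq_single m]
    · rw [monDeriv_monomial, tsub_self]
      congr 1
      · refine congrArg _ (Finset.prod_congr rfl fun i _ => ?_)
        rw [Nat.descFactorial_self]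
    · intro m' hm' hne
      have hmd' : m'.degree = k := by
        by_contra hc
        exact (mem_support_iff.mp hm') (((mem_homogeneousSubmodule _ _).mp hq).coeff_eq_zero hc)
      rw [monDeriv_monomial]
      by_cases hle : m ≤ m'
      · exact absurd (eq_of_le_of_degree_eq hle (by omega)).symm hne
      · rw [prod_desc_eq_zero hle, mul_zero, map_zero]
    · intro hm''
      exact absurd hm hm''
  rw [h0] at hval
  have : coeff m q * ∏ i, ((m i).factorial : ℂ) = 0 := by
    have h2 := congrArg (coeff 0) hval.symm
    rwa [coeff_zero, coeff_monomial, if_pos rfl] at h2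
  rcases mul_eq_zero.mp this with hc | hc
  · exact (mem_support_iff.mp hm) hc
  · have : ∀ i, ((m i).factorial : ℂ) ≠ 0 := fun i =>
      Nat.cast_ne_zero.mpr (Nat.factorial_ne_zero _)
    exact (Finset.prod_ne_zero_iff.mpr fun i _ => this i) hc

lemma homog_fd {n : ℕ} (e : ℕ) :
    FiniteDimensional ℂ (homogeneousSubmodule (Fin (n+1)) ℂ e) := by
  apply Submodule.finiteDimensional_of_le
    (S₂ := MvPolynomial.restrictTotalDegree (Fin (n+1)) ℂ e)
  intro x hx
  rw [MvPolynomial.mem_restrictTotalDegree]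
  exact ((mem_homogeneousSubmodule _ _).mp hx).totalDegree_le


set_option synthInstance.maxHeartbeats 1000000
set_option linter.unusedVariables false

/-- If some homogeneous ideal `J` with Hilbert function bounded by `r` has its
degree-`d` part annihilating `p ∈ S_d`, then all catalecticant ranks of `p` are at most `r`. -/
theorem cactus_subset_catalecticant (n d r : ℕ) (hr : 1 ≤ r)
    (p : PolyS n) (hp : p ∈ homogeneousSubmodule (Fin (n+1)) ℂ d)
    (J : Ideal (PolyS n)) (hJ : IsHomogIdeal J) (hh : ∀ e : ℕ, hilb J e ≤ r)
    (hann : ∀ α ∈ J, α ∈ homogeneousSubmodule (Fin (n+1)) ℂ d → contract α p = 0) :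
    ∀ i : ℕ, i ≤ d → cr i p ≤ r := by
  intro i hi
  set H := homogeneousSubmodule (Fin (n+1)) ℂ i with hH
  haveI : FiniteDimensional ℂ H := homog_fd i
  set f : H →ₗ[ℂ] PolyS n := (contractMap p).comp H.subtype with hf
  -- span of Omega is range of f
  have hspan : Submodule.span ℂ (Omega p i) = LinearMap.range f := by
    have hset : Omega p i = ↑(LinearMap.range f) := by
      ext q
      constructor
      · rintro ⟨α, hα, rfl⟩
        exact ⟨⟨α, hα⟩, rfl⟩
      · rintro ⟨⟨α, hα⟩, rfl⟩
        exact ⟨α, hα, rfl⟩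
    rw [hset, Submodule.span_eq]
  -- the graded piece is in the kernel
  have hker : Submodule.comap H.subtype (gradedPiece J i) ≤ LinearMap.ker f := by
    rintro ⟨α, hαH⟩ hαJ
    rw [Submodule.mem_comap] at hαJ
    obtain ⟨hJmem, -⟩ := hαJ
    rw [LinearMap.mem_ker]
    show contract α p = 0
    apply eq_zero_of_contract_eq_zero (contract_mem_homog hαH hp)
    intro β hβ
    rw [← contract_mul]
    apply hann _ (Ideal.mul_mem_left J β hJmem)
    have := ((mem_homogeneousSubmodule _ _).mp hβ).mul ((mem_homogeneousSubmodule _ _).mp hαH)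
    rw [Nat.sub_add_cancel hi] at this
    exact (mem_homogeneousSubmodule _ _).mpr this
  -- dimension count
  have hrank := LinearMap.finrank_range_add_finrank_ker f
  have hgp : gradedPiece J i ≤ H := inf_le_right
  have hdim : Module.finrank ℂ (Submodule.comap H.subtype (gradedPiece J i))
      = Module.finrank ℂ (gradedPiece J i) :=
    (Submodule.comapSubtypeEquivOfLe hgp).finrank_eq
  have hmono := Submodule.finrank_mono hker
  have hle := hh i
  rw [hilb, ← hH] at hle
  rw [cr, hspan]
  omega

end
end

section
/- Let J ⊆ S = ℂ[x_0,…,x_n] be a homogeneous ideal and write h(e) := h_{S/J}(e) for the Hilbert function of S/J. If h(i) ≤ i for some integer i ≥ 1, then h(i+1) ≤ h(i). (Special case of Macaulay's bound on the growth of Hilbert functions of standard graded algebras.) -/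
open MvPolynomial

noncomputable section

section MacaulayAuxSection

namespace MacaulayAux

open Finsupp

variable {σ : Type*}

/-! ### Basic degree lemmas -/

lemma degree_add' (a b : σ →₀ ℕ) : (a + b).degree = a.degree + b.degree := by
  simp [Finsupp.degree_eq_weight_one, map_add]

lemma degree_single' (j : σ) : (Finsupp.single j (1 : ℕ)).degree = 1 := by
  classical
  exact Finsupp.degree_single j 1

lemma sub_single_add {m : σ →₀ ℕ} {j : σ} (h : m j ≠ 0) :
    m - Finsupp.single j 1 + Finsupp.single j 1 = m := by
  classical
  ext k
  simp only [Finsupp.add_apply, Finsupp.tsub_apply, Finsupp.single_apply]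
  by_cases hk : j = k
  · subst hk; rw [if_pos rfl]; have := Nat.pos_of_ne_zero h; omega
  · simp [hk]

lemma degree_sub_single {m : σ →₀ ℕ} {j : σ} (h : m j ≠ 0) :
    (m - Finsupp.single j 1).degree + 1 = m.degree := by
  conv_rhs => rw [← sub_single_add h]
  rw [degree_add', degree_single']

lemma exists_ne_zero_of_degree_ne_zero {m : σ →₀ ℕ} (h : m.degree ≠ 0) :
    ∃ j, m j ≠ 0 := by
  by_contra hc
  push_neg at hc
  exact h ((Finsupp.degree_eq_zero_iff m).mpr (Finsupp.ext fun a => hc a))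

/-! ### Level sets of sets of monomials -/

/-- The degree-`e` level of a set of monomials. -/
def lvl (O : Set (σ →₀ ℕ)) (e : ℕ) : Set (σ →₀ ℕ) := {m | m ∈ O ∧ m.degree = e}

lemma lvl_finite [Finite σ] (O : Set (σ →₀ ℕ)) (e : ℕ) : (lvl O e).Finite :=
  (Finsupp.finite_of_degree_le e).subset fun _ hm => le_of_eq hm.2

lemma lvl_mono {O O' : Set (σ →₀ ℕ)} (h : O ⊆ O') (e : ℕ) : lvl O e ⊆ lvl O' e :=
  fun _ hm => ⟨h hm.1, hm.2⟩

/-- The part of `O` avoiding the variable `j`. -/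
def obar (O : Set (σ →₀ ℕ)) (j : σ) : Set (σ →₀ ℕ) := {m | m ∈ O ∧ m j = 0}

/-- The quotient of `O` by the variable `j`. -/
def quo (O : Set (σ →₀ ℕ)) (j : σ) : Set (σ →₀ ℕ) := {q | q + Finsupp.single j 1 ∈ O}

lemma lvl_decomp [Finite σ] (O : Set (σ →₀ ℕ)) (j : σ) (e : ℕ) :
    (lvl O (e + 1)).ncard = (lvl (obar O j) (e + 1)).ncard + (lvl (quo O j) e).ncard := by
  classical
  have hset : lvl O (e + 1) =
      lvl (obar O j) (e + 1) ∪ (fun q => q + Finsupp.single j 1) '' lvl (quo O j) e := by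
    ext m
    constructor
    · rintro ⟨hm, hd⟩
      by_cases hj : m j = 0
      · exact Or.inl ⟨⟨hm, hj⟩, hd⟩
      · right
        refine ⟨m - Finsupp.single j 1, ⟨?_, ?_⟩, sub_single_add hj⟩
        · show m - Finsupp.single j 1 + Finsupp.single j 1 ∈ O
          rw [sub_single_add hj]; exact hm
        · have := degree_sub_single hj; omega
    · rintro (⟨⟨hm, _⟩, hd⟩ | ⟨q, ⟨hq, hd⟩, rfl⟩)
      · exact ⟨hm, hd⟩
      · exact ⟨hq, by rw [degree_add', degree_single', hd]⟩
  have hdisj : Disjoint (lvl (obar O j) (e + 1))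
      ((fun q => q + Finsupp.single j 1) '' lvl (quo O j) e) := by
    rw [Set.disjoint_left]
    rintro m ⟨⟨_, hj⟩, _⟩ ⟨q, _, rfl⟩
    simp [Finsupp.add_apply, Finsupp.single_apply] at hj
  rw [hset, Set.ncard_union_eq hdisj (lvl_finite _ _) ((lvl_finite _ _).image _),
    Set.ncard_image_of_injective _ (add_left_injective _)]

/-! ### The combinatorial heart: order ideals of monomials -/

lemma comb [Finite σ] :
    ∀ (i : ℕ) (V : Finset σ) (O : Set (σ →₀ ℕ)),
      (∀ m ∈ O, ∀ j : σ, m j ≠ 0 → m - Finsupp.single j 1 ∈ O) →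
      (∀ m ∈ O, ∀ j, m j ≠ 0 → j ∈ V) →
      (lvl O i).ncard ≤ i → (lvl O (i + 1)).ncard ≤ (lvl O i).ncard := by
  classical
  intro i
  induction i with
  | zero =>
    intro V O hO _ h
    have h0 : lvl O 0 = ∅ :=
      Set.ncard_eq_zero (lvl_finite _ _) |>.mp (Nat.le_zero.mp h)
    have h1 : lvl O 1 = ∅ := by
      ext m
      simp only [Set.mem_empty_iff_false, iff_false]
      rintro ⟨hm, hd⟩
      obtain ⟨j, hj⟩ := exists_ne_zero_of_degree_ne_zero (by omega : m.degree ≠ 0)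
      have h2 : m - Finsupp.single j 1 ∈ lvl O 0 :=
        ⟨hO m hm j hj, by have := degree_sub_single hj; omega⟩
      rw [h0] at h2
      exact h2
    rw [h1]
    simp
  | succ i IH =>
    intro V
    induction V using Finset.induction_on with
    | empty =>
      intro O hO hsupp h
      have h2 : lvl O (i + 1 + 1) = ∅ := by
        ext m
        simp only [Set.mem_empty_iff_false, iff_false]
        rintro ⟨hm, hd⟩
        obtain ⟨j, hj⟩ := exists_ne_zero_of_degree_ne_zero (by omega : m.degree ≠ 0)
        exact absurd (hsupp m hm j hj) (Finset.notMem_empty j)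
      rw [h2]
      simp
    | @insert j V₀ hj IHV =>
      intro O hO hsupp h
      -- the two derived order ideals
      have hObar_ideal : ∀ m ∈ obar O j, ∀ k : σ, m k ≠ 0 →
          m - Finsupp.single k 1 ∈ obar O j := by
        rintro m ⟨hm, hmj⟩ k hk
        refine ⟨hO m hm k hk, ?_⟩
        simp [Finsupp.tsub_apply, hmj]
      have hObar_supp : ∀ m ∈ obar O j, ∀ k, m k ≠ 0 → k ∈ V₀ := by
        rintro m ⟨hm, hmj⟩ k hk
        have hkj : k ≠ j := fun he => hk (by rw [he]; exact hmj)
        have := hsupp m hm k hk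
        simp only [Finset.mem_insert] at this
        tauto
      have hQ_ideal : ∀ q ∈ quo O j, ∀ k : σ, q k ≠ 0 →
          q - Finsupp.single k 1 ∈ quo O j := by
        intro q hq k hk
        have hm : q + Finsupp.single j 1 ∈ O := hq
        have hk' : (q + Finsupp.single j 1 : σ →₀ ℕ) k ≠ 0 := by
          rw [Finsupp.add_apply]; omega
        have h3 := hO _ hm k hk'
        have h4 : q + Finsupp.single j 1 - Finsupp.single k 1
            = q - Finsupp.single k 1 + Finsupp.single j 1 := by
          ext a
          have hq1 := Nat.pos_of_ne_zero hk
          simp only [Finsupp.add_apply, Finsupp.tsub_apply, Finsupp.single_apply]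
          by_cases h5 : k = a
          · subst h5; by_cases h6 : j = k <;> simp [h6] <;> omega
          · simp [h5]
        rw [h4] at h3
        exact h3
      have hQ_supp : ∀ q ∈ quo O j, ∀ k, q k ≠ 0 → k ∈ insert j V₀ := by
        intro q hq k hk
        have hk' : (q + Finsupp.single j 1 : σ →₀ ℕ) k ≠ 0 := by
          rw [Finsupp.add_apply]; omega
        exact hsupp _ hq k hk'
      have d0 := lvl_decomp O j i
      have d1 := lvl_decomp O j (i + 1)
      by_cases hq : (lvl (quo O j) i).ncard ≤ i
      · -- both pieces behave monotonically
        have hQmono := IH (insert j V₀) (quo O j) hQ_ideal hQ_supp hq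
        have hObound : (lvl (obar O j) (i + 1)).ncard ≤ i + 1 :=
          le_trans (Set.ncard_le_ncard (lvl_mono (fun m hm => hm.1) (i + 1))
            (lvl_finite _ _)) h
        have hOmono := IHV (obar O j) hObar_ideal hObar_supp hObound
        omega
      · -- the `j`-free part of level `i+1` is empty
        push_neg at hq
        have hzero : (lvl (obar O j) (i + 1)).ncard = 0 := by omega
        have hempty : lvl (obar O j) (i + 1) = ∅ :=
          Set.ncard_eq_zero (lvl_finite _ _) |>.mp hzero
        have hempty2 : lvl (obar O j) (i + 1 + 1) = ∅ := by
          ext m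
          simp only [Set.mem_empty_iff_false, iff_false]
          rintro ⟨hm, hd⟩
          obtain ⟨k, hk⟩ := exists_ne_zero_of_degree_ne_zero (by omega : m.degree ≠ 0)
          have h2 : m - Finsupp.single k 1 ∈ lvl (obar O j) (i + 1) :=
            ⟨hObar_ideal m hm k hk, by have := degree_sub_single hk; omega⟩
          rw [hempty] at h2
          exact h2
        have hsub : lvl (quo O j) (i + 1) ⊆ lvl O (i + 1) := by
          rintro q ⟨hq', hd⟩
          have hm : q + Finsupp.single j 1 ∈ O := hq'
          have hj' : (q + Finsupp.single j 1 : σ →₀ ℕ) j ≠ 0 := by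
            rw [Finsupp.add_apply, Finsupp.single_eq_same]; omega
          have h3 := hO _ hm j hj'
          rw [add_tsub_cancel_right] at h3
          exact ⟨h3, hd⟩
        have h4 : (lvl (quo O j) (i + 1)).ncard ≤ (lvl O (i + 1)).ncard :=
          Set.ncard_le_ncard hsub (lvl_finite _ _)
        rw [hempty2] at d1
        simp only [Set.ncard_empty, Nat.zero_add] at d1
        omega

variable {σ : Type*} [Fintype σ] [LinearOrder σ]

/-- The (lex-)leading monomial of a multivariate polynomial. -/
def LM (f : MvPolynomial σ ℂ) : σ →₀ ℕ := ofLex (f.support.sup (fun d => toLex d))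

lemma toLex_LM (f : MvPolynomial σ ℂ) : toLex (LM f) = f.support.sup (fun d => toLex d) := rfl

lemma LM_mem {f : MvPolynomial σ ℂ} (hf : f ≠ 0) : LM f ∈ f.support := by
  obtain ⟨d, hd, he⟩ := Finset.exists_mem_eq_sup f.support
    (MvPolynomial.support_nonempty.mpr hf) (fun d => toLex d)
  have : LM f = d := by unfold LM; rw [he]; exact ofLex_toLex d
  rwa [this]

lemma coeff_LM_ne_zero {f : MvPolynomial σ ℂ} (hf : f ≠ 0) :
    MvPolynomial.coeff (LM f) f ≠ 0 :=
  MvPolynomial.mem_support_iff.mp (LM_mem hf)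

lemma le_LM {f : MvPolynomial σ ℂ} {d : σ →₀ ℕ} (hd : d ∈ f.support) :
    toLex d ≤ toLex (LM f) := by
  rw [toLex_LM]
  exact Finset.le_sup (f := fun d => toLex d) hd

lemma LM_X_mul {f : MvPolynomial σ ℂ} (hf : f ≠ 0) (j : σ) :
    LM (X j * f) = Finsupp.single j 1 + LM f := by
  have hsupp := MvPolynomial.support_X_mul j f
  have h1 : Finsupp.single j 1 + LM f ∈ (X j * f).support := by
    rw [hsupp]
    exact Finset.mem_map.mpr ⟨LM f, LM_mem hf, addLeftEmbedding_apply _ _⟩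
  have hne : X j * f ≠ 0 := mul_ne_zero (MvPolynomial.X_ne_zero j) hf
  have h2 := LM_mem hne
  rw [hsupp, Finset.mem_map] at h2
  obtain ⟨d, hd, he⟩ := h2
  rw [addLeftEmbedding_apply] at he
  have hle1 : toLex (LM (X j * f)) ≤ toLex (Finsupp.single j 1 + LM f) := by
    rw [← he, toLex_add, toLex_add]
    exact add_le_add_right (le_LM hd) _
  have hle2 := le_LM h1
  exact toLex.injective (le_antisymm hle1 hle2)


/-- The set of leading monomials of nonzero elements of a subspace. -/
def LMset (V : Submodule ℂ (MvPolynomial σ ℂ)) : Set (σ →₀ ℕ) :=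
  {d | ∃ f ∈ V, f ≠ 0 ∧ LM f = d}

lemma LMset_mono {V W : Submodule ℂ (MvPolynomial σ ℂ)} (h : V ≤ W) : LMset V ⊆ LMset W := by
  rintro d ⟨f, hf, hne, rfl⟩
  exact ⟨f, h hf, hne, rfl⟩

lemma finrank_eq_ncard_LMset (V : Submodule ℂ (MvPolynomial σ ℂ))
    (hfin : (LMset V).Finite) : Module.finrank ℂ V = (LMset V).ncard := by
  classical
  haveI := hfin.fintype
  let φ : V →ₗ[ℂ] (LMset V → ℂ) :=
    { toFun := fun f d => MvPolynomial.coeff d.1 f.1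
      map_add' := by intro f g; funext d; simp [MvPolynomial.coeff_add]
      map_smul' := by intro c f; funext d; simp [MvPolynomial.coeff_smul] }
  have hinj : Function.Injective φ := by
    rw [injective_iff_map_eq_zero]
    intro f hf0
    by_contra hne0
    have hf1 : (f : MvPolynomial σ ℂ) ≠ 0 := by
      intro h1
      exact hne0 (Subtype.ext h1)
    have hd : LM (f : MvPolynomial σ ℂ) ∈ LMset V := ⟨f.1, f.2, hf1, rfl⟩
    have h2 : MvPolynomial.coeff (LM (f : MvPolynomial σ ℂ)) f.1 = 0 := congrFun hf0 ⟨_, hd⟩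
    exact coeff_LM_ne_zero hf1 h2
  haveI : FiniteDimensional ℂ V := FiniteDimensional.of_injective φ hinj
  have hcard : Fintype.card (LMset V) = (LMset V).ncard := by
    rw [← Nat.card_eq_fintype_card, Nat.card_coe_set_eq]
  apply le_antisymm
  · have := LinearMap.finrank_le_finrank_of_injective hinj
    rwa [Module.finrank_pi, hcard] at this
  · choose F hFmem hFne hFLM using fun d : LMset V => d.2
    have hli : LinearIndependent ℂ (fun d : LMset V => (⟨F d, hFmem d⟩ : V)) := by
      rw [linearIndependent_iff']
      intro s c hsum i0 hi0s
      by_contra hi0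
      have hTn : (s.filter (fun i => c i ≠ 0)).Nonempty :=
        ⟨i0, Finset.mem_filter.mpr ⟨hi0s, hi0⟩⟩
      obtain ⟨istar, histar, hmax⟩ :=
        Finset.exists_max_image (s.filter (fun i => c i ≠ 0)) (fun i : LMset V => toLex i.1) hTn
      have histar' := Finset.mem_filter.mp histar
      have hsum2 : ∑ i ∈ s, c i * MvPolynomial.coeff istar.1 (F i) = 0 := by
        have h0 := congrArg (fun v : V => MvPolynomial.coeff istar.1 v.1) hsum
        simp only [Submodule.coe_sum, Submodule.coe_smul, MvPolynomial.coeff_sum,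
          MvPolynomial.coeff_smul, smul_eq_mul, ZeroMemClass.coe_zero,
          MvPolynomial.coeff_zero] at h0
        exact h0
      have heval : ∑ i ∈ s, c i * MvPolynomial.coeff istar.1 (F i)
          = c istar * MvPolynomial.coeff istar.1 (F istar) := by
        refine Finset.sum_eq_single istar ?_ ?_
        · intro i his hine
          by_cases hci : c i = 0
          · rw [hci, zero_mul]
          · have hi : i ∈ s.filter (fun i => c i ≠ 0) := Finset.mem_filter.mpr ⟨his, hci⟩
            have hzero : MvPolynomial.coeff istar.1 (F i) = 0 := by
              by_contra hc
              have hmem : istar.1 ∈ (F i).support := MvPolynomial.mem_support_iff.mpr hc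
              have hle := le_LM hmem
              rw [hFLM i] at hle
              have hge := hmax i hi
              have : (i.1 : σ →₀ ℕ) = istar.1 := toLex.injective (le_antisymm hge hle)
              exact hine (Subtype.ext this)
            rw [hzero, mul_zero]
        · intro hnis
          exact absurd histar'.1 hnis
      rw [heval] at hsum2
      have hcoeff : MvPolynomial.coeff istar.1 (F istar) ≠ 0 := by
        have hlm : LM (F istar) = istar.1 := hFLM istar
        rw [← hlm]
        exact coeff_LM_ne_zero (hFne istar)
      exact histar'.2 (by
        rcases mul_eq_zero.mp hsum2 with h | h
        · exact h
        · exact absurd h hcoeff)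
    have := hli.fintype_card_le_finrank
    rwa [hcard] at this


lemma degree_setOf_finite (e : ℕ) : {d : σ →₀ ℕ | d.degree = e}.Finite :=
  (Finsupp.finite_of_degree_le e).subset fun _ h => le_of_eq h

lemma LMset_homog (e : ℕ) :
    LMset (homogeneousSubmodule σ ℂ e) = {d : σ →₀ ℕ | d.degree = e} := by
  classical
  ext d
  constructor
  · rintro ⟨f, hf, hne, rfl⟩
    have hh : f.IsHomogeneous e := (mem_homogeneousSubmodule e f).mp hf
    have := hh (coeff_LM_ne_zero hne)
    rw [Set.mem_setOf_eq, Finsupp.degree_eq_weight_one]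
    exact this
  · intro hd
    refine ⟨monomial d 1, (mem_homogeneousSubmodule e _).mpr (isHomogeneous_monomial 1 hd),
      ?_, ?_⟩
    · simp [MvPolynomial.monomial_eq_zero]
    · unfold LM
      rw [MvPolynomial.support_monomial]
      simp

section Glue

variable {n : ℕ}

lemma gradedPiece_le (J : Ideal (PolyS n)) (e : ℕ) :
    gradedPiece J e ≤ homogeneousSubmodule (Fin (n+1)) ℂ e := inf_le_right

lemma LMset_gradedPiece_subset (J : Ideal (PolyS n)) (e : ℕ) :
    LMset (gradedPiece J e) ⊆ {d : Fin (n+1) →₀ ℕ | d.degree = e} := by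
  rw [← LMset_homog]
  exact LMset_mono (gradedPiece_le J e)

lemma hilb_eq_ncard (J : Ideal (PolyS n)) (e : ℕ) :
    hilb J e = ({d : Fin (n+1) →₀ ℕ | d.degree = e} \ LMset (gradedPiece J e)).ncard := by
  have hsub := LMset_gradedPiece_subset J e
  have hfin : (LMset (gradedPiece J e)).Finite := (degree_setOf_finite e).subset hsub
  rw [hilb, finrank_eq_ncard_LMset (homogeneousSubmodule (Fin (n+1)) ℂ e)
      (by rw [LMset_homog]; exact degree_setOf_finite e),
    finrank_eq_ncard_LMset (gradedPiece J e) hfin, LMset_homog]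
  exact (Set.ncard_diff hsub hfin).symm

/-- The set of monomials that are not a leading monomial of the corresponding graded
piece of `J`. -/
def bigO (J : Ideal (PolyS n)) : Set (Fin (n+1) →₀ ℕ) :=
  {d | d ∉ LMset (gradedPiece J d.degree)}

lemma lvl_bigO (J : Ideal (PolyS n)) (e : ℕ) :
    lvl (bigO J) e = {d : Fin (n+1) →₀ ℕ | d.degree = e} \ LMset (gradedPiece J e) := by
  ext m
  constructor
  · rintro ⟨hm, hd⟩
    refine ⟨hd, ?_⟩
    have : m ∉ LMset (gradedPiece J m.degree) := hm
    rwa [hd] at this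
  · rintro ⟨hd, hm⟩
    refine ⟨?_, hd⟩
    show m ∉ LMset (gradedPiece J m.degree)
    rwa [hd]

lemma bigO_ideal (J : Ideal (PolyS n)) :
    ∀ m ∈ bigO J, ∀ j, m j ≠ 0 → m - Finsupp.single j 1 ∈ bigO J := by
  intro m hm j hjm hcon
  apply hm
  obtain ⟨f, hfJ, hfne, hLM⟩ := hcon
  have hfJ' := (Submodule.mem_inf).mp hfJ
  have hdeg : ((m - Finsupp.single j 1).degree) + 1 = m.degree := degree_sub_single hjm
  refine ⟨X j * f, ?_, mul_ne_zero (MvPolynomial.X_ne_zero j) hfne, ?_⟩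
  · rw [gradedPiece, Submodule.mem_inf]
    constructor
    · rw [Submodule.restrictScalars_mem]
      exact Ideal.mul_mem_left J (X j) ((Submodule.restrictScalars_mem ℂ J f).mp hfJ'.1)
    · have hhom : f.IsHomogeneous ((m - Finsupp.single j 1).degree) := hfJ'.2
      have h2 := (isHomogeneous_X ℂ j).mul hhom
      rw [mem_homogeneousSubmodule]
      have h3 : 1 + (m - Finsupp.single j 1).degree = m.degree := by omega
      rwa [h3] at h2
  · rw [LM_X_mul hfne j, hLM]
    exact (add_comm _ _).trans (sub_single_add hjm)

end Glue

end MacaulayAux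

end MacaulayAuxSection

/-- Macaulay bound, special case: if `h_{S/J}(i) ≤ i` for some `i ≥ 1`, then
`h_{S/J}(i+1) ≤ h_{S/J}(i)`. -/
theorem macaulay_bound_special (n : ℕ) (J : Ideal (PolyS n)) (hJ : IsHomogIdeal J)
    (i : ℕ) (hi : 1 ≤ i) (h : hilb J i ≤ i) :
    hilb J (i + 1) ≤ hilb J i := by
  have heq : ∀ e, hilb J e = (MacaulayAux.lvl (MacaulayAux.bigO J) e).ncard := fun e => by
    rw [MacaulayAux.hilb_eq_ncard J e, MacaulayAux.lvl_bigO J e]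
  have h1 : (MacaulayAux.lvl (MacaulayAux.bigO J) i).ncard ≤ i := by
    rw [← heq]; exact h
  have h2 := MacaulayAux.comb i Finset.univ (MacaulayAux.bigO J)
    (MacaulayAux.bigO_ideal J) (fun m _ j _ => Finset.mem_univ j) h1
  rw [heq i, heq (i+1)]
  exact h2

end
end

section
/- Let p ∈ S_d be a homogeneous polynomial of degree d in x_0,…,x_n over ℂ, and suppose cr_i(p) ≤ i for some integer i with 1 ≤ i ≤ d. Then the catalecticant ranks of p are non-increasing from degree i on: cr_{j+1}(p) ≤ cr_j(p) for every j with i ≤ j ≤ d−1. -/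
open MvPolynomial

noncomputable section

namespace CatAux


variable {n : ℕ}

/-- lower shadow of a set of exponent vectors -/
def shadow (A : Finset (Fin (n+1) →₀ ℕ)) : Finset (Fin (n+1) →₀ ℕ) :=
  A.biUnion (fun μ => μ.support.image (fun i => μ - Finsupp.single i 1))

lemma sub_single_add_cancel {μ : Fin (n+1) →₀ ℕ} {i : Fin (n+1)} (h : μ i ≠ 0) :
    μ - Finsupp.single i 1 + Finsupp.single i 1 = μ :=
  tsub_add_cancel_of_le (Finsupp.single_le_iff.mpr (Nat.one_le_iff_ne_zero.mpr h))

lemma degree_sub_single {μ : Fin (n+1) →₀ ℕ} {i : Fin (n+1)} (h : μ i ≠ 0) :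
    (μ - Finsupp.single i 1).degree = μ.degree - 1 := by
  have h1 : (μ - Finsupp.single i 1).degree + (Finsupp.single i (1:ℕ)).degree = μ.degree := by
    rw [Finsupp.degree_eq_weight_one, ← map_add, sub_single_add_cancel h]
  have h2 : (Finsupp.single i (1:ℕ)).degree = 1 := by
    exact Finsupp.degree_single i 1
  omega

lemma mem_shadow {A : Finset (Fin (n+1) →₀ ℕ)} {σ : Fin (n+1) →₀ ℕ} :
    σ ∈ shadow A ↔ ∃ μ ∈ A, ∃ i, μ i ≠ 0 ∧ σ = μ - Finsupp.single i 1 := by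
  simp only [shadow, Finset.mem_biUnion, Finset.mem_image, Finsupp.mem_support_iff]
  constructor
  · rintro ⟨μ, hμ, i, hi, rfl⟩; exact ⟨μ, hμ, i, hi, rfl⟩
  · rintro ⟨μ, hμ, i, hi, rfl⟩; exact ⟨μ, hμ, i, hi, rfl⟩

/-- The elementary Macaulay/Kruskal–Katona-type bound in the low range:
a set of monomials of degree `D` of cardinality at most `D` has shadow at least as large. -/
lemma kk (c : ℕ) : ∀ (D : ℕ) (A : Finset (Fin (n+1) →₀ ℕ)), A.card ≤ c →
    (∀ μ ∈ A, μ.degree = D) → A.card ≤ D → A.card ≤ (shadow A).card := by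
  induction c with
  | zero => intro D A hc _ _; omega
  | succ c ih =>
    intro D A hc hdeg hD
    rcases A.eq_empty_or_nonempty with rfl | ⟨μ₀, hμ₀⟩
    · simp
    have hcardpos : 0 < A.card := Finset.card_pos.mpr ⟨μ₀, hμ₀⟩
    have hD1 : 1 ≤ D := le_trans hcardpos hD
    have hμ₀ne : μ₀ ≠ 0 := by
      intro h; have := hdeg μ₀ hμ₀; rw [h, map_zero] at this; omega
    obtain ⟨i₀, hi₀⟩ : ∃ i, μ₀ i ≠ 0 := by
      by_contra hno; push_neg at hno
      exact hμ₀ne (Finsupp.ext fun a => hno a)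
    by_cases hall : ∀ ν ∈ A, ν i₀ ≠ 0
    · -- all elements divisible by x_{i₀}
      have hinj : Set.InjOn (fun ν => ν - Finsupp.single i₀ 1) A := by
        intro ν hν ν' hν' h
        have := congrArg (· + Finsupp.single i₀ 1) h
        simpa [sub_single_add_cancel (hall ν hν), sub_single_add_cancel (hall ν' hν')] using this
      have himg : A.image (fun ν => ν - Finsupp.single i₀ 1) ⊆ shadow A := by
        intro x hx
        obtain ⟨ν, hν, rfl⟩ := Finset.mem_image.mp hx
        exact mem_shadow.mpr ⟨ν, hν, i₀, hall ν hν, rfl⟩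
      calc A.card = (A.image (fun ν => ν - Finsupp.single i₀ 1)).card :=
              (Finset.card_image_of_injOn hinj).symm
        _ ≤ (shadow A).card := Finset.card_le_card himg
    · push_neg at hall
      obtain ⟨ν₀, hν₀A, hν₀⟩ := hall
      classical
      set A₀ := A.filter (fun ν => ν i₀ = 0) with hA₀def
      set A₁ := A.filter (fun ν => ¬ ν i₀ = 0) with hA₁def
      have hcards : A₀.card + A₁.card = A.card :=
        Finset.card_filter_add_card_filter_not _
      have hμ₀A₁ : μ₀ ∈ A₁ := Finset.mem_filter.mpr ⟨hμ₀, hi₀⟩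
      have hν₀A₀ : ν₀ ∈ A₀ := Finset.mem_filter.mpr ⟨hν₀A, hν₀⟩
      have hA₀pos : 0 < A₀.card := Finset.card_pos.mpr ⟨ν₀, hν₀A₀⟩
      have hA₁pos : 0 < A₁.card := Finset.card_pos.mpr ⟨μ₀, hμ₀A₁⟩
      set B := A₁.image (fun ν => ν - Finsupp.single i₀ 1) with hBdef
      have hA₁i : ∀ ν ∈ A₁, ν i₀ ≠ 0 := fun ν hν => (Finset.mem_filter.mp hν).2
      have hBcard : B.card = A₁.card := by
        apply Finset.card_image_of_injOn
        intro ν hν ν' hν' h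
        have := congrArg (· + Finsupp.single i₀ 1) h
        simpa [sub_single_add_cancel (hA₁i ν hν), sub_single_add_cancel (hA₁i ν' hν')] using this
      -- two disjoint subsets of the shadow
      have h1 : shadow A₀ ⊆ shadow A := by
        apply Finset.biUnion_subset_biUnion_of_subset_left
        exact Finset.filter_subset _ _
      have h2 : (shadow B).image (· + Finsupp.single i₀ 1) ⊆ shadow A := by
        intro x hx
        obtain ⟨σ, hσ, rfl⟩ := Finset.mem_image.mp hx
        obtain ⟨β, hβ, j, hj, rfl⟩ := mem_shadow.mp hσ
        obtain ⟨ν, hνA₁, rfl⟩ := Finset.mem_image.mp hβ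
        have hνi₀ : ν i₀ ≠ 0 := hA₁i ν hνA₁
        simp only [Finsupp.tsub_apply, Finsupp.single_apply] at hj
        have hνj : ν j ≠ 0 := by intro h; rw [h] at hj; simp at hj
        have key : (ν - Finsupp.single j 1 : Fin (n+1) →₀ ℕ) i₀ ≠ 0 := by
          rw [Finsupp.tsub_apply, Finsupp.single_apply]
          rcases eq_or_ne j i₀ with rfl | hji
          · simp only [if_pos rfl]
            simp only [if_pos rfl] at hj
            omega
          · simp only [if_neg hji]
            simpa using hνi₀
        apply mem_shadow.mpr
        refine ⟨ν, (Finset.mem_filter.mp hνA₁).1, j, hνj, ?_⟩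
        rw [tsub_tsub, add_comm (Finsupp.single i₀ 1) (Finsupp.single j 1), ← tsub_tsub,
          sub_single_add_cancel key]
      have hdisj : Disjoint (shadow A₀) ((shadow B).image (· + Finsupp.single i₀ 1)) := by
        rw [Finset.disjoint_left]
        intro x hx hx'
        obtain ⟨μ, hμ, j, hj, rfl⟩ := mem_shadow.mp hx
        have hμ0 : μ i₀ = 0 := (Finset.mem_filter.mp hμ).2
        obtain ⟨σ, _, h⟩ := Finset.mem_image.mp hx'
        have h' := congrArg (fun f : Fin (n+1) →₀ ℕ => f i₀) h
        simp only [Finsupp.add_apply, Finsupp.tsub_apply, Finsupp.single_eq_same, hμ0,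
          Nat.zero_sub] at h'
        omega
      -- apply the inductive hypothesis
      have e0 : A₀.card ≤ (shadow A₀).card := by
        apply ih D A₀ ?_ ?_ ?_
        · omega
        · exact fun μ hμ => hdeg μ (Finset.filter_subset _ _ hμ)
        · omega
      have e1 : B.card ≤ (shadow B).card := by
        apply ih (D-1) B ?_ ?_ ?_
        · omega
        · intro β hβ
          obtain ⟨ν, hν, rfl⟩ := Finset.mem_image.mp hβ
          rw [degree_sub_single (hA₁i ν hν), hdeg ν (Finset.filter_subset _ _ hν)]
        · omega
      have himgcard : ((shadow B).image (· + Finsupp.single i₀ 1)).card = (shadow B).card :=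
        Finset.card_image_of_injective _ (add_left_injective _)
      have hunion : (shadow A₀).card + (shadow B).card ≤ (shadow A).card := by
        have := Finset.card_union_of_disjoint hdisj
        have hsub : (shadow A₀) ∪ ((shadow B).image (· + Finsupp.single i₀ 1)) ⊆ shadow A :=
          Finset.union_subset h1 h2
        have := Finset.card_le_card hsub
        omega
      omega



/-- `∂/∂x i` as a linear endomorphism. -/
def P (i : Fin (n+1)) : Module.End ℂ (PolyS n) := (pderiv i).toLinearMap

lemma pderiv_comm (i j : Fin (n+1)) (f : PolyS n) :
    pderiv i (pderiv j f) = pderiv j (pderiv i f) := by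
  induction f using MvPolynomial.induction_on' with
  | add p q hp hq => simp only [map_add, hp, hq]
  | monomial m c =>
    rcases eq_or_ne i j with rfl | hij
    · rfl
    · simp only [pderiv_monomial]
      rw [tsub_tsub, tsub_tsub, add_comm (Finsupp.single j 1) (Finsupp.single i 1)]
      congr 1
      have h1 : (m - Finsupp.single j 1 : Fin (n+1) →₀ ℕ) i = m i := by
        rw [Finsupp.tsub_apply, Finsupp.single_apply, if_neg (by exact fun h => hij h.symm)]
        simp
      have h2 : (m - Finsupp.single i 1 : Fin (n+1) →₀ ℕ) j = m j := by
        rw [Finsupp.tsub_apply, Finsupp.single_apply, if_neg (by exact fun h => hij h)]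
        simp
      rw [h1, h2]; ring

lemma commute_P (i k : Fin (n+1)) : Commute (P (n := n) i) (P k) := by
  apply LinearMap.ext
  intro f
  exact pderiv_comm i k f

lemma list_prod_bump (i : Fin (n+1)) (m : Fin (n+1) →₀ ℕ) :
    ∀ (l : List (Fin (n+1))), l.Nodup → i ∈ l →
      (l.map fun k => P (n := n) k ^ ((m + Finsupp.single i 1 : Fin (n+1) →₀ ℕ) k)).prod
        = P i * (l.map fun k => P (n := n) k ^ (m k)).prod := by
  intro l
  induction l with
  | nil => intro _ h; simp at h
  | cons a t iht =>
    intro hnd hmem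
    have hnda : a ∉ t := (List.nodup_cons.mp hnd).1
    have hndt : t.Nodup := (List.nodup_cons.mp hnd).2
    rcases eq_or_ne i a with rfl | hia
    · -- head is i; tail untouched
      have htail : (t.map fun k => P (n := n) k ^ ((m + Finsupp.single i 1 : Fin (n+1) →₀ ℕ) k))
          = t.map fun k => P (n := n) k ^ (m k) := by
        apply List.map_congr_left
        intro k hk
        have hki : k ≠ i := fun h => hnda (h ▸ hk)
        rw [Finsupp.add_apply, Finsupp.single_apply, if_neg (fun h => hki h.symm), add_zero]
      simp only [List.map_cons, List.prod_cons, htail]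
      rw [Finsupp.add_apply, Finsupp.single_eq_same, pow_succ', mul_assoc]
    · have hit : i ∈ t := by
        rcases List.mem_cons.mp hmem with h | h
        · exact absurd h hia
        · exact h
      have hhead : (m + Finsupp.single i 1 : Fin (n+1) →₀ ℕ) a = m a := by
        rw [Finsupp.add_apply, Finsupp.single_apply, if_neg hia, add_zero]
      simp only [List.map_cons, List.prod_cons, hhead, iht hndt hit]
      rw [← mul_assoc, ← mul_assoc]
      congr 1
      exact ((commute_P i a).pow_right (m a)).symm.eq

lemma monDeriv_add_single (m : Fin (n+1) →₀ ℕ) (i : Fin (n+1)) :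
    monDeriv (m + Finsupp.single i 1) = P (n := n) i * monDeriv m := by
  unfold monDeriv
  exact list_prod_bump i m (List.finRange (n+1)) (List.nodup_finRange _) (List.mem_finRange i)

lemma contract_support_subset {α p : PolyS n} {s : Finset (Fin (n+1) →₀ ℕ)}
    (h : α.support ⊆ s) :
    contract α p = ∑ m ∈ s, α.coeff m • monDeriv m p := by
  unfold contract
  apply Finset.sum_subset h
  intro x _ hx
  rw [MvPolynomial.notMem_support_iff.mp hx, zero_smul]

lemma contract_add (α β p : PolyS n) :
    contract (α + β) p = contract α p + contract β p := by
  classical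
  set s := (α + β).support ∪ α.support ∪ β.support with hs
  rw [contract_support_subset (p := p) (s := s)
        (Finset.subset_union_left.trans Finset.subset_union_left),
    contract_support_subset (p := p) (s := s)
        (Finset.subset_union_right.trans Finset.subset_union_left),
    contract_support_subset (p := p) (s := s) Finset.subset_union_right,
    ← Finset.sum_add_distrib]
  apply Finset.sum_congr rfl
  intro m _
  rw [MvPolynomial.coeff_add, add_smul]

lemma contract_smul (c : ℂ) (α p : PolyS n) :
    contract (c • α) p = c • contract α p := by
  classical
  rw [contract_support_subset (p := p) (s := α.support) MvPolynomial.support_smul,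
    contract, Finset.smul_sum]
  apply Finset.sum_congr rfl
  intro m _
  rw [MvPolynomial.coeff_smul, smul_eq_mul, mul_smul]

/-- contraction against `p`, as a linear map in the operator argument. -/
def contractL (p : PolyS n) : PolyS n →ₗ[ℂ] PolyS n where
  toFun α := contract α p
  map_add' α β := contract_add α β p
  map_smul' c α := contract_smul c α p

@[simp] lemma contractL_apply (p α : PolyS n) : contractL p α = contract α p := rfl

lemma contract_monomial (m : Fin (n+1) →₀ ℕ) (c : ℂ) (p : PolyS n) :
    contract (monomial m c) p = c • monDeriv m p := by
  classical
  rcases eq_or_ne c 0 with rfl | hc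
  · simp [contract, MvPolynomial.support_monomial]
  · unfold contract
    rw [MvPolynomial.support_monomial, if_neg hc, Finset.sum_singleton, coeff_monomial,
      if_pos rfl]

lemma contract_X_mul (i : Fin (n+1)) (α p : PolyS n) :
    contract (X i * α) p = pderiv i (contract α p) := by
  induction α using MvPolynomial.induction_on' with
  | add q r hq hr =>
    rw [mul_add, contract_add, contract_add, map_add, hq, hr]
  | monomial m c =>
    rw [show (X i : PolyS n) = monomial (Finsupp.single i 1) 1 from rfl, monomial_mul, one_mul,
      contract_monomial, contract_monomial]
    show c • (monDeriv (Finsupp.single i 1 + m)) p = P (n := n) i (c • monDeriv m p)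
    rw [map_smul]
    congr 1
    rw [show (Finsupp.single i 1 + m) = m + Finsupp.single i 1 from add_comm _ _,
      monDeriv_add_single]
    exact Module.End.mul_apply _ _ _


section LM

open Finsupp

variable (n : ℕ)

/-- the lex monomial order on exponents -/
def mo : MonomialOrder (Fin (n+1)) := MonomialOrder.lex

variable {n}

/-- leading monomial (exponent vector) of a polynomial -/
def lm (f : PolyS n) : Fin (n+1) →₀ ℕ := (mo n).toSyn.symm (f.support.sup (mo n).toSyn)

lemma lm_mem {f : PolyS n} (hf : f ≠ 0) : lm f ∈ f.support := by
  have hne : f.support.Nonempty := by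
    rw [Finset.nonempty_iff_ne_empty]
    intro h
    exact hf (MvPolynomial.support_eq_empty.mp h)
  obtain ⟨b, hb, he⟩ := Finset.exists_mem_eq_sup f.support hne ((mo n).toSyn)
  rw [lm, he, AddEquiv.symm_apply_apply]
  exact hb

lemma coeff_lm_ne_zero {f : PolyS n} (hf : f ≠ 0) : MvPolynomial.coeff (lm f) f ≠ 0 :=
  MvPolynomial.mem_support_iff.mp (lm_mem hf)

lemma le_lm {f : PolyS n} {m : Fin (n+1) →₀ ℕ} (hm : m ∈ f.support) :
    (mo n).toSyn m ≤ (mo n).toSyn (lm f) := by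
  rw [lm, AddEquiv.apply_symm_apply]
  exact Finset.le_sup hm

lemma lm_monomial (μ : Fin (n+1) →₀ ℕ) : lm (monomial μ (1:ℂ) : PolyS n) = μ := by
  classical
  rw [lm, MvPolynomial.support_monomial, if_neg one_ne_zero, Finset.sup_singleton,
    AddEquiv.symm_apply_apply]

lemma X_mul_ne_zero {f : PolyS n} (hf : f ≠ 0) (i : Fin (n+1)) : X i * f ≠ 0 := by
  intro h
  have : (X i * f).support = ∅ := by rw [h, MvPolynomial.support_zero]
  rw [MvPolynomial.support_X_mul i f, Finset.map_eq_empty] at this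
  exact hf (MvPolynomial.support_eq_empty.mp this)

lemma lm_X_mul {f : PolyS n} (hf : f ≠ 0) (i : Fin (n+1)) :
    lm (X i * f) = Finsupp.single i 1 + lm f := by
  have hsupp := MvPolynomial.support_X_mul i f
  apply (mo n).toSyn.injective
  apply le_antisymm
  · have hmem := lm_mem (X_mul_ne_zero hf i)
    rw [hsupp, Finset.mem_map] at hmem
    obtain ⟨m, hm, he⟩ := hmem
    have h2 : lm (X i * f) = Finsupp.single i 1 + m := by
      rw [← he]; rfl
    rw [h2, map_add, map_add]
    exact add_le_add_right (le_lm hm) _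
  · apply le_lm
    rw [hsupp, Finset.mem_map]
    exact ⟨lm f, lm_mem hf, rfl⟩

end LM


section Dim

open Finsupp

variable {n : ℕ}

def monE (n e : ℕ) : Finset (Fin (n+1) →₀ ℕ) := Finset.finsuppAntidiag Finset.univ e

lemma mem_monE {e : ℕ} {μ : Fin (n+1) →₀ ℕ} : μ ∈ monE n e ↔ μ.degree = e := by
  classical
  rw [monE, Finset.mem_finsuppAntidiag]
  have hsum : ∑ i ∈ Finset.univ, μ i = μ.degree :=
    (Finset.sum_subset (Finset.subset_univ _)
      (fun x _ hx => Finsupp.notMem_support_iff.mp hx)).symm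
  constructor
  · rintro ⟨h, -⟩; rw [← h, ← hsum]
  · intro h; exact ⟨by rw [hsum, h], Finset.subset_univ _⟩

lemma degree_eq_of_mem_support {f : PolyS n} {e : ℕ}
    (hf : f ∈ homogeneousSubmodule (Fin (n+1)) ℂ e)
    {m : Fin (n+1) →₀ ℕ} (hm : m ∈ f.support) : m.degree = e := by
  have h := (MvPolynomial.mem_homogeneousSubmodule _ _).mp hf
  have h2 := h (MvPolynomial.mem_support_iff.mp hm)
  rw [Finsupp.degree_eq_weight_one]; exact h2

open Classical in
def lmSet (W : Submodule ℂ (PolyS n)) (e : ℕ) : Finset (Fin (n+1) →₀ ℕ) :=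
  (monE n e).filter (fun μ => ∃ f ∈ W, f ≠ 0 ∧ lm f = μ)

lemma mem_lmSet {W : Submodule ℂ (PolyS n)} {e : ℕ} {μ : Fin (n+1) →₀ ℕ} :
    μ ∈ lmSet W e ↔ μ ∈ monE n e ∧ ∃ f ∈ W, f ≠ 0 ∧ lm f = μ := by
  classical
  rw [lmSet]
  simp [Finset.mem_filter]

lemma lm_mem_monE {W : Submodule ℂ (PolyS n)} {e : ℕ}
    (hW : W ≤ homogeneousSubmodule (Fin (n+1)) ℂ e) {f : PolyS n}
    (hfW : f ∈ W) (hf : f ≠ 0) : lm f ∈ monE n e :=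
  mem_monE.mpr (degree_eq_of_mem_support (hW hfW) (lm_mem hf))

lemma pi_inj {W : Submodule ℂ (PolyS n)} {e : ℕ}
    (hW : W ≤ homogeneousSubmodule (Fin (n+1)) ℂ e) :
    ∃ π : W →ₗ[ℂ] ({x // x ∈ lmSet W e} → ℂ), Function.Injective π := by
  classical
  refine ⟨LinearMap.pi (fun μ =>
    (MvPolynomial.lcoeff ℂ (μ : Fin (n+1) →₀ ℕ)).comp W.subtype), ?_⟩
  rw [← LinearMap.ker_eq_bot, LinearMap.ker_eq_bot']
  intro f hf
  by_contra hne
  have hfo : (f : PolyS n) ≠ 0 := fun h => hne (Subtype.ext h)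
  have hμ : lm (f : PolyS n) ∈ lmSet W e :=
    mem_lmSet.mpr ⟨lm_mem_monE hW f.2 hfo, ⟨f, f.2, hfo, rfl⟩⟩
  have h2 := congrFun hf ⟨_, hμ⟩
  simp only [LinearMap.pi_apply, LinearMap.comp_apply, Submodule.coe_subtype,
    MvPolynomial.lcoeff_apply, Pi.zero_apply] at h2
  exact coeff_lm_ne_zero hfo h2

lemma fd_of_le {W : Submodule ℂ (PolyS n)} {e : ℕ}
    (hW : W ≤ homogeneousSubmodule (Fin (n+1)) ℂ e) : FiniteDimensional ℂ W := by
  obtain ⟨π, hπ⟩ := pi_inj hW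
  exact Module.Finite.of_injective π hπ

lemma finrank_le_card_lmSet {W : Submodule ℂ (PolyS n)} {e : ℕ}
    (hW : W ≤ homogeneousSubmodule (Fin (n+1)) ℂ e) :
    Module.finrank ℂ W ≤ (lmSet W e).card := by
  obtain ⟨π, hπ⟩ := pi_inj hW
  have := LinearMap.finrank_le_finrank_of_injective hπ
  rwa [Module.finrank_fintype_fun_eq_card, Fintype.card_coe] at this

lemma card_lmSet_le_finrank {W : Submodule ℂ (PolyS n)} {e : ℕ}
    [FiniteDimensional ℂ W] :
    (lmSet W e).card ≤ Module.finrank ℂ W := by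
  classical
  have hch : ∀ μ : {x // x ∈ lmSet W e},
      ∃ f : PolyS n, f ∈ W ∧ f ≠ 0 ∧ lm f = (μ : Fin (n+1) →₀ ℕ) := by
    intro μ
    obtain ⟨-, f, hfW, hf0, hlm⟩ := mem_lmSet.mp μ.2
    exact ⟨f, hfW, hf0, hlm⟩
  choose F hFW hF0 hFlm using hch
  have hli : LinearIndependent ℂ (fun μ : {x // x ∈ lmSet W e} => (⟨F μ, hFW μ⟩ : W)) := by
    rw [linearIndependent_iff']
    intro s g hsum
    by_contra hcon
    push_neg at hcon
    obtain ⟨i₁, hi₁s, hgi₁⟩ := hcon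
    set t := s.filter (fun i => g i ≠ 0) with htdef
    have htne : t.Nonempty := ⟨i₁, Finset.mem_filter.mpr ⟨hi₁s, hgi₁⟩⟩
    obtain ⟨μs, hμst, hmax⟩ :=
      Finset.exists_max_image t (fun i => (mo n).toSyn (i : Fin (n+1) →₀ ℕ)) htne
    have hμss : μs ∈ s := (Finset.mem_filter.mp hμst).1
    have hcoeff : ∑ i ∈ s, g i * MvPolynomial.coeff (μs : Fin (n+1) →₀ ℕ) (F i) = 0 := by
      have h0 := congrArg
        (fun w : W => MvPolynomial.coeff (μs : Fin (n+1) →₀ ℕ) (w : PolyS n)) hsum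
      simpa [MvPolynomial.coeff_sum, MvPolynomial.coeff_smul] using h0
    rw [Finset.sum_eq_single μs
      (by
        intro i hi hne
        rcases eq_or_ne (g i) 0 with h | h
        · rw [h, zero_mul]
        · have hit : i ∈ t := Finset.mem_filter.mpr ⟨hi, h⟩
          have hz : MvPolynomial.coeff (μs : Fin (n+1) →₀ ℕ) (F i) = 0 := by
            by_contra hc
            have hmem : (μs : Fin (n+1) →₀ ℕ) ∈ (F i).support :=
              MvPolynomial.mem_support_iff.mpr hc
            have h1 := le_lm hmem
            rw [hFlm i] at h1
            have h2 := hmax i hit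
            have h3 := (mo n).toSyn.injective (le_antisymm h2 h1)
            exact hne (Subtype.ext h3)
          rw [hz, mul_zero])
      (fun h => absurd hμss h)] at hcoeff
    have hcne := coeff_lm_ne_zero (hF0 μs)
    rw [hFlm μs] at hcne
    exact (Finset.mem_filter.mp hμst).2 ((mul_eq_zero.mp hcoeff).resolve_right hcne)
  have := hli.fintype_card_le_finrank
  rwa [Fintype.card_coe] at this

lemma finrank_eq_card_lmSet {W : Submodule ℂ (PolyS n)} {e : ℕ}
    (hW : W ≤ homogeneousSubmodule (Fin (n+1)) ℂ e) :
    Module.finrank ℂ W = (lmSet W e).card := by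
  haveI := fd_of_le hW
  exact le_antisymm (finrank_le_card_lmSet hW) card_lmSet_le_finrank

lemma lmSet_homog_full (e : ℕ) :
    lmSet (homogeneousSubmodule (Fin (n+1)) ℂ e) e = monE n e := by
  apply Finset.Subset.antisymm
  · intro μ hμ; exact (mem_lmSet.mp hμ).1
  · intro μ hμ
    refine mem_lmSet.mpr ⟨hμ, monomial μ 1, ?_, ?_, lm_monomial μ⟩
    · rw [MvPolynomial.mem_homogeneousSubmodule]
      exact MvPolynomial.isHomogeneous_monomial _ (mem_monE.mp hμ)
    · simp [MvPolynomial.monomial_eq_zero]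

/-- the degree-`e` part of the annihilator of `p` -/
def annSub (p : PolyS n) (e : ℕ) : Submodule ℂ (PolyS n) :=
  homogeneousSubmodule (Fin (n+1)) ℂ e ⊓ LinearMap.ker (contractL p)

set_option synthInstance.maxHeartbeats 1000000 in
lemma cr_add_ann (p : PolyS n) (e : ℕ) :
    cr e p + Module.finrank ℂ (annSub p e)
      = Module.finrank ℂ (homogeneousSubmodule (Fin (n+1)) ℂ e) := by
  classical
  haveI : FiniteDimensional ℂ (homogeneousSubmodule (Fin (n+1)) ℂ e) := fd_of_le le_rfl
  have h2 : Omega p e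
      = (contractL p) '' (homogeneousSubmodule (Fin (n+1)) ℂ e : Set (PolyS n)) := by
    ext q
    simp only [Omega, Set.mem_setOf_eq, Set.mem_image, SetLike.mem_coe, contractL_apply]
    constructor
    · rintro ⟨α, hα, rfl⟩; exact ⟨α, hα, rfl⟩
    · rintro ⟨α, hα, rfl⟩; exact ⟨α, hα, rfl⟩
  have h1 : Submodule.span ℂ (Omega p e)
      = LinearMap.range ((contractL p).domRestrict (homogeneousSubmodule (Fin (n+1)) ℂ e)) := by
    rw [LinearMap.range_domRestrict, h2, Submodule.span_image, Submodule.span_eq]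
  have h3 := LinearMap.finrank_range_add_finrank_ker
    ((contractL p).domRestrict (homogeneousSubmodule (Fin (n+1)) ℂ e))
  rw [← h3, cr, h1]
  congr 1
  rw [LinearMap.ker_domRestrict]
  have h4 : Submodule.comap (homogeneousSubmodule (Fin (n+1)) ℂ e).subtype
        (LinearMap.ker (contractL p))
      = Submodule.comap (homogeneousSubmodule (Fin (n+1)) ℂ e).subtype (annSub p e) := by
    rw [annSub, Submodule.comap_inf, Submodule.comap_subtype_self, top_inf_eq]
  rw [h4]
  exact ((Submodule.comapSubtypeEquivOfLe (inf_le_left :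
    annSub p e ≤ homogeneousSubmodule (Fin (n+1)) ℂ e)).finrank_eq).symm

/-- The one-step Macaulay bound for catalecticant ranks. -/
lemma cr_step (p : PolyS n) (t : ℕ) (ht : cr t p ≤ t) : cr (t+1) p ≤ cr t p := by
  classical
  have hA_t_le : annSub p t ≤ homogeneousSubmodule (Fin (n+1)) ℂ t := inf_le_left
  have hA_t1_le : annSub p (t+1) ≤ homogeneousSubmodule (Fin (n+1)) ℂ (t+1) := inf_le_left
  have e_t := cr_add_ann p t
  have e_t1 := cr_add_ann p (t+1)
  have hat : Module.finrank ℂ (annSub p t) = (lmSet (annSub p t) t).card :=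
    finrank_eq_card_lmSet hA_t_le
  have hat1 : Module.finrank ℂ (annSub p (t+1)) = (lmSet (annSub p (t+1)) (t+1)).card :=
    finrank_eq_card_lmSet hA_t1_le
  have hst : Module.finrank ℂ (homogeneousSubmodule (Fin (n+1)) ℂ t) = (monE n t).card := by
    rw [finrank_eq_card_lmSet le_rfl, lmSet_homog_full]
  have hst1 : Module.finrank ℂ (homogeneousSubmodule (Fin (n+1)) ℂ (t+1))
      = (monE n (t+1)).card := by
    rw [finrank_eq_card_lmSet le_rfl, lmSet_homog_full]
  have hsubA : lmSet (annSub p t) t ⊆ monE n t := Finset.filter_subset _ _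
  have hsubA1 : lmSet (annSub p (t+1)) (t+1) ⊆ monE n (t+1) := Finset.filter_subset _ _
  set N : Finset (Fin (n+1) →₀ ℕ) := monE n t \ lmSet (annSub p t) t with hN
  set N' : Finset (Fin (n+1) →₀ ℕ) := monE n (t+1) \ lmSet (annSub p (t+1)) (t+1) with hN'
  have hNcard : N.card = cr t p := by
    rw [hN, Finset.card_sdiff_of_subset hsubA]
    have h5 := Finset.card_le_card hsubA
    omega
  have hN'card : N'.card = cr (t+1) p := by
    rw [hN', Finset.card_sdiff_of_subset hsubA1]
    have h5 := Finset.card_le_card hsubA1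
    omega
  suffices hle : N'.card ≤ N.card by omega
  by_contra hgt
  push_neg at hgt
  obtain ⟨T, hTsub, hTcard⟩ := Finset.exists_subset_card_eq (show N.card + 1 ≤ N'.card by omega)
  have hshadow : shadow T ⊆ N := by
    intro σ hσ
    obtain ⟨μ, hμT, j, hj, rfl⟩ := mem_shadow.mp hσ
    have hμN' := hTsub hμT
    have hμmonE : μ ∈ monE n (t+1) := (Finset.mem_sdiff.mp hμN').1
    have hμnotlm : μ ∉ lmSet (annSub p (t+1)) (t+1) := (Finset.mem_sdiff.mp hμN').2
    rw [hN, Finset.mem_sdiff]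
    constructor
    · rw [mem_monE, degree_sub_single hj, mem_monE.mp hμmonE]
      omega
    · intro hc
      obtain ⟨-, f, hfA, hf0, hlmf⟩ := mem_lmSet.mp hc
      apply hμnotlm
      have hfS : f ∈ homogeneousSubmodule (Fin (n+1)) ℂ t := (Submodule.mem_inf.mp hfA).1
      have hfK : contract f p = 0 := (Submodule.mem_inf.mp hfA).2
      refine mem_lmSet.mpr ⟨hμmonE, X j * f, ?_, X_mul_ne_zero hf0 j, ?_⟩
      · apply Submodule.mem_inf.mpr
        constructor
        · rw [MvPolynomial.mem_homogeneousSubmodule]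
          have hhom := (MvPolynomial.isHomogeneous_X ℂ j).mul
            ((MvPolynomial.mem_homogeneousSubmodule _ _).mp hfS)
          rwa [Nat.add_comm 1 t] at hhom
        · rw [LinearMap.mem_ker, contractL_apply, contract_X_mul, hfK, map_zero]
      · rw [lm_X_mul hf0 j, hlmf,
          add_tsub_cancel_of_le (Finsupp.single_le_iff.mpr (Nat.one_le_iff_ne_zero.mpr hj))]
  have hTdeg : ∀ μ ∈ T, μ.degree = t + 1 := by
    intro μ hμ
    exact mem_monE.mp (Finset.mem_sdiff.mp (hTsub hμ)).1
  have hkk := kk T.card (t+1) T le_rfl hTdeg (by omega)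
  have hfin := Finset.card_le_card hshadow
  omega

end Dim

end CatAux

/-- If `cr_i(p) ≤ i` for some `1 ≤ i ≤ d`, then the catalecticant ranks of `p`
are non-increasing from degree `i` on. -/
theorem catalecticant_ranks_nonincreasing (n d i : ℕ) (hi1 : 1 ≤ i) (hi2 : i ≤ d)
    (p : PolyS n) (hp : p ∈ homogeneousSubmodule (Fin (n+1)) ℂ d)
    (h : cr i p ≤ i) :
    ∀ j : ℕ, i ≤ j → j + 1 ≤ d → cr (j + 1) p ≤ cr j p := by
  intro j hij _
  have hall : ∀ k, i ≤ k → cr k p ≤ k := by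
    intro k hk
    induction k, hk using Nat.le_induction with
    | base => exact h
    | succ k hk ihk => exact le_trans (CatAux.cr_step p k ihk) (le_trans ihk (Nat.le_succ k))
  exact CatAux.cr_step p j (hall j hij)

end
end
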